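/- Let (X, μ) be a measure space, let H = L²_ℂ(X, μ), and let (φₙ)_{n∈ℕ} be an orthonormal basis of H. Then the family of vectors Φₙ⁻ = (1/√2)·(φₙ, −conj φₙ) and Φₙ⁺ = (1/√2)·(φₙ, conj φₙ), n ∈ ℕ, is an orthonormal basis of the Hilbert direct sum H ⊕ H. -/

import Mathlib

open MeasureTheory

/-- Pointwise complex conjugation on `L²_ℂ(X, μ)`. -/
noncomputable def lpConj {X : Type*} [MeasurableSpace X] {μ : Measure X} (f : Lp ℂ 2 μ) :
    Lp ℂ 2 μ :=
  ((starL' ℝ : ℂ ≃L[ℝ] ℂ).toContinuousLinearMap).compLp f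

local notation "⟪" x ", " y "⟫" => @inner ℂ _ _ x y

section aux
variable {X : Type*} [MeasurableSpace X] {μ : Measure X}

lemma lpConj_coeFn (f : Lp ℂ 2 μ) : lpConj f =ᵐ[μ] fun x => (starRingEnd ℂ) (f x) := by
  filter_upwards [ContinuousLinearMap.coeFn_compLp
    ((starL' ℝ : ℂ ≃L[ℝ] ℂ).toContinuousLinearMap) f] with x hx
  simpa [lpConj] using hx

lemma inner_lpConj (f g : Lp ℂ 2 μ) : ⟪lpConj f, lpConj g⟫ = ⟪g, f⟫ := by
  rw [L2.inner_def, L2.inner_def]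
  apply integral_congr_ae
  filter_upwards [lpConj_coeFn f, lpConj_coeFn g] with x hf hg
  rw [hf, hg]
  simp [RCLike.inner_apply, mul_comm]

lemma inner_lpConj_left (f g : Lp ℂ 2 μ) : ⟪lpConj f, g⟫ = ⟪lpConj g, f⟫ := by
  rw [L2.inner_def, L2.inner_def]
  apply integral_congr_ae
  filter_upwards [lpConj_coeFn f, lpConj_coeFn g] with x hf hg
  rw [hf, hg]
  simp [RCLike.inner_apply, mul_comm]

lemma lpConj_lpConj (f : Lp ℂ 2 μ) : lpConj (lpConj f) = f := by
  ext1
  filter_upwards [lpConj_coeFn (lpConj f), lpConj_coeFn f] with x h1 h2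
  rw [h1, h2]; simp

lemma lpConj_zero : lpConj (0 : Lp ℂ 2 μ) = 0 := by
  ext1
  filter_upwards [lpConj_coeFn (0 : Lp ℂ 2 μ), Lp.coeFn_zero ℂ 2 μ] with x h1 h2
  rw [h1, h2]; simp

end aux

/-- The lifted family `Φₙ⁻ = (1/√2)(φₙ, −conj φₙ)`, `Φₙ⁺ = (1/√2)(φₙ, conj φₙ)` built from
an orthonormal basis `(φₙ)` of `H = L²_ℂ(X, μ)` is an orthonormal basis of `H ⊕ H`. -/
theorem lifted_orthonormal_basis {X : Type*} [MeasurableSpace X] (μ : Measure X)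
    (φ : ℕ → Lp ℂ 2 μ)
    (horth : Orthonormal ℂ φ)
    (hspan : (Submodule.span ℂ (Set.range φ)).topologicalClosure = ⊤)
    (Φ : ℕ ⊕ ℕ → WithLp 2 (Lp ℂ 2 μ × Lp ℂ 2 μ))
    (hΦminus : ∀ n : ℕ, Φ (Sum.inl n) =
      (Real.sqrt 2)⁻¹ • (WithLp.equiv 2 (Lp ℂ 2 μ × Lp ℂ 2 μ)).symm (φ n, -lpConj (φ n)))
    (hΦplus : ∀ n : ℕ, Φ (Sum.inr n) =
      (Real.sqrt 2)⁻¹ • (WithLp.equiv 2 (Lp ℂ 2 μ × Lp ℂ 2 μ)).symm (φ n, lpConj (φ n))) :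
    Orthonormal ℂ Φ ∧
      (Submodule.span ℂ (Set.range Φ)).topologicalClosure = ⊤ := by
  have horth' := orthonormal_iff_ite.mp horth
  have hr : ((Real.sqrt 2)⁻¹ * (Real.sqrt 2)⁻¹ : ℝ) = 2⁻¹ := by
    rw [← mul_inv, Real.mul_self_sqrt (by norm_num)]
  constructor
  · rw [orthonormal_iff_ite]
    rintro (m | m) (n | n)
    · rw [hΦminus, hΦminus]
      simp only [RCLike.real_smul_eq_coe_smul (K := ℂ)]
      rw [inner_smul_real_left, inner_smul_real_right, smul_smul, hr]
      simp only [WithLp.prod_inner_apply, WithLp.equiv_symm_apply, WithLp.ofLp_toLp,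
        inner_neg_neg, inner_lpConj, horth' m n, horth' n m]
      by_cases h : m = n <;> simp [h, eq_comm, Complex.real_smul] <;> norm_num
    · rw [hΦminus, hΦplus]
      simp only [RCLike.real_smul_eq_coe_smul (K := ℂ)]
      rw [inner_smul_real_left, inner_smul_real_right, smul_smul, hr]
      simp only [WithLp.prod_inner_apply, WithLp.equiv_symm_apply, WithLp.ofLp_toLp,
        inner_neg_left, inner_lpConj, horth' m n, horth' n m]
      by_cases h : m = n <;> simp [h, eq_comm]
    · rw [hΦplus, hΦminus]
      simp only [RCLike.real_smul_eq_coe_smul (K := ℂ)]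
      rw [inner_smul_real_left, inner_smul_real_right, smul_smul, hr]
      simp only [WithLp.prod_inner_apply, WithLp.equiv_symm_apply, WithLp.ofLp_toLp,
        inner_neg_right, inner_lpConj, horth' m n, horth' n m]
      by_cases h : m = n <;> simp [h, eq_comm]
    · rw [hΦplus, hΦplus]
      simp only [RCLike.real_smul_eq_coe_smul (K := ℂ)]
      rw [inner_smul_real_left, inner_smul_real_right, smul_smul, hr]
      simp only [WithLp.prod_inner_apply, WithLp.equiv_symm_apply, WithLp.ofLp_toLp,
        inner_lpConj, horth' m n, horth' n m]
      by_cases h : m = n <;> simp [h, eq_comm, Complex.real_smul] <;> norm_num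
  · rw [Submodule.topologicalClosure_eq_top_iff] at hspan ⊢
    rw [Submodule.eq_bot_iff]
    intro v hv
    have hvi : ∀ i, ⟪Φ i, v⟫ = 0 := fun i =>
      (Submodule.mem_orthogonal _ v).mp hv _ (Submodule.subset_span ⟨i, rfl⟩)
    set a := v.fst with ha
    set b := v.snd with hb
    have hs : ((Real.sqrt 2)⁻¹ : ℝ) ≠ 0 := by positivity
    have h1 : ∀ n, ⟪φ n, a⟫ - ⟪lpConj (φ n), b⟫ = 0 := by
      intro n
      have := hvi (Sum.inl n)
      rw [hΦminus, RCLike.real_smul_eq_coe_smul (K := ℂ), inner_smul_real_left] at this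
      simp only [WithLp.prod_inner_apply, WithLp.equiv_symm_apply, WithLp.ofLp_toLp,
        inner_neg_left, smul_eq_zero, WithLp.ofLp_fst, WithLp.ofLp_snd, ← ha, ← hb] at this
      rcases this with h | h
      · exact absurd h hs
      · linear_combination h
    have h2 : ∀ n, ⟪φ n, a⟫ + ⟪lpConj (φ n), b⟫ = 0 := by
      intro n
      have := hvi (Sum.inr n)
      rw [hΦplus, RCLike.real_smul_eq_coe_smul (K := ℂ), inner_smul_real_left] at this
      simp only [WithLp.prod_inner_apply, WithLp.equiv_symm_apply, WithLp.ofLp_toLp,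
        smul_eq_zero, WithLp.ofLp_fst, WithLp.ofLp_snd, ← ha, ← hb] at this
      rcases this with h | h
      · exact absurd h hs
      · linear_combination h
    have haz : ∀ n, ⟪φ n, a⟫ = 0 := fun n => by linear_combination (h1 n + h2 n) / 2
    have hbz : ∀ n, ⟪φ n, lpConj b⟫ = 0 := by
      intro n
      have h3 : ⟪lpConj (φ n), b⟫ = 0 := by linear_combination (h2 n - h1 n) / 2
      rw [inner_lpConj_left, ← inner_conj_symm] at h3
      simpa using congrArg (starRingEnd ℂ) h3
    have key : ∀ c : Lp ℂ 2 μ, (∀ n, ⟪φ n, c⟫ = 0) → c = 0 := by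
      intro c hc
      have : c ∈ (Submodule.span ℂ (Set.range φ))ᗮ := by
        rw [Submodule.mem_orthogonal]
        intro u hu
        induction hu using Submodule.span_induction with
        | mem x hx => obtain ⟨n, rfl⟩ := hx; exact hc n
        | zero => simp
        | add x y _ _ hx hy => rw [inner_add_left, hx, hy, add_zero]
        | smul r x _ hx => rw [inner_smul_left, hx, mul_zero]
      rw [hspan] at this
      simpa using this
    have ha0 : a = 0 := key a haz
    have hb0 : b = 0 := by
      have := key (lpConj b) hbz
      calc b = lpConj (lpConj b) := (lpConj_lpConj b).symm
        _ = lpConj 0 := by rw [this]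
        _ = 0 := lpConj_zero
    show v = 0
    have : v = WithLp.toLp 2 (a, b) := rfl
    rw [this, ha0, hb0]
    rfl
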